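/- Let Y be a normed space and A ⊆ Y nonempty, convex, with A ≠ Y. Then the oriented distance function D_A(y) = d_A(y) − d_{Y∖A}(y) is a convex function on Y. -/

import Mathlib

open Metric

section Aux

variable {Y : Type*} [NormedAddCommGroup Y] [NormedSpace ℝ Y]

/-- If `z ∈ A` and `ball z ρ ⊆ A`, then `infDist y A ≤ max (dist y z - ρ) 0`. -/
lemma aux_infDist_le_of_ball_subset {A : Set Y} {z : Y} {ρ : ℝ} (hρ : 0 ≤ ρ)
    (hz : z ∈ A) (hball : ball z ρ ⊆ A) (y : Y) :
    Metric.infDist y A ≤ max (dist y z - ρ) 0 := by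
  apply le_of_forall_pos_le_add
  intro ε hε
  set d := dist y z with hd
  have hd0 : 0 ≤ d := dist_nonneg
  set δ := min (ε / 2) (ρ / 2) with hδ
  have hδρ : δ ≤ ρ / 2 := min_le_right _ _
  have hδε : δ ≤ ε / 2 := min_le_left _ _
  have hδ0 : 0 ≤ δ := le_min (by linarith) (by linarith)
  rcases le_or_gt (d - ρ + δ) 0 with hcase | hcase
  · -- here d ≤ ρ - δ
    rcases eq_or_lt_of_le hρ with hρ0 | hρpos
    · -- ρ = 0 : then δ = 0 and d ≤ 0, so y = z ∈ A
      have hδ0' : δ = 0 := by rw [hδ, ← hρ0]; simp; positivity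
      have hdle : d ≤ 0 := by rw [← hρ0] at hcase; linarith
      have hyz : y = z := by rwa [← dist_le_zero]
      have h0 : Metric.infDist y A = 0 := hyz ▸ Metric.infDist_zero_of_mem hz
      rw [h0]
      positivity
    · have hδpos : 0 < δ := lt_min (by linarith) (by linarith)
      have hmem : y ∈ ball z ρ := by
        rw [mem_ball]
        show d < ρ
        linarith
      have h0 : Metric.infDist y A = 0 := Metric.infDist_zero_of_mem (hball hmem)
      rw [h0]
      positivity
  · -- d - ρ + δ > 0. Take p := y + c • (z - y) with c = (d - ρ + δ)/d
    have hdpos : 0 < d := by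
      by_contra h
      push_neg at h
      have hd' : d = 0 := le_antisymm h hd0
      rw [hd'] at hcase
      linarith
    set c := (d - ρ + δ) / d with hc
    have hc0 : 0 < c := div_pos hcase hdpos
    have hc1 : c ≤ 1 := by
      rw [hc, div_le_one hdpos]
      linarith
    set p := y + c • (z - y) with hp
    have hdistyp : dist y p = c * d := by
      rw [hp, dist_eq_norm]
      have : y - (y + c • (z - y)) = -(c • (z - y)) := by abel
      rw [this, norm_neg, norm_smul, Real.norm_eq_abs, abs_of_pos hc0,
        ← dist_eq_norm, dist_comm]
    have hdistpz : dist p z = (1 - c) * d := by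
      rw [hp, dist_eq_norm]
      have : y + c • (z - y) - z = -((1 - c) • (z - y)) := by
        rw [sub_smul, one_smul]; abel
      rw [this, norm_neg, norm_smul, Real.norm_eq_abs, abs_of_nonneg (by linarith),
        ← dist_eq_norm, dist_comm]
    have hcd : c * d = d - ρ + δ := by
      rw [hc]; field_simp
    have hpA : p ∈ A := by
      rcases eq_or_lt_of_le hc1 with hceq | hclt
      · have hpz : p = z := by rw [hp, hceq]; simp
        rwa [hpz]
      · apply hball
        rw [mem_ball, hdistpz]
        have hδρ' : δ < ρ := by
          have : c * d < d := by
            have := mul_lt_mul_of_pos_right hclt hdpos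
            simpa using this
          rw [hcd] at this; linarith
        have hδpos : 0 < δ := lt_min (by linarith) (by linarith)
        nlinarith
    calc Metric.infDist y A ≤ dist y p := Metric.infDist_le_dist_of_mem hpA
      _ = c * d := hdistyp
      _ = d - ρ + δ := hcd
      _ ≤ max (d - ρ) 0 + ε := by
          have : d - ρ ≤ max (d - ρ) 0 := le_max_left _ _
          linarith

end Aux

section Main

variable {Y : Type*} [NormedAddCommGroup Y] [NormedSpace ℝ Y]

local notation "D" => fun (A : Set Y) (x : Y) => Metric.infDist x A - Metric.infDist x Aᶜ

lemma aux_mem_of_lt_nonneg {A : Set Y} (hne : A.Nonempty) {a : Y} {s : ℝ}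
    (ha : D A a < s) (hs : 0 ≤ s) : Metric.infDist a A ≤ s := by
  rcases eq_or_lt_of_le (Metric.infDist_nonneg (s := Aᶜ) (x := a)) with h0 | hpos
  · simp only at ha
    linarith [ha, h0]
  · -- infDist a Aᶜ > 0 → a ∉ closure Aᶜ → a ∈ A
    have haA : a ∈ A := by
      by_contra h
      have : a ∈ Aᶜ := h
      have := Metric.infDist_zero_of_mem this
      linarith
    rw [Metric.infDist_zero_of_mem haA]
    exact hs

lemma aux_mem_of_lt_neg {A : Set Y} {a : Y} {s : ℝ}
    (ha : D A a < s) (hs : s < 0) : Metric.ball a (-s) ⊆ A := by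
  intro z hz
  by_contra h
  have hzc : z ∈ Aᶜ := h
  have h1 : Metric.infDist a Aᶜ ≤ dist a z := Metric.infDist_le_dist_of_mem hzc
  have h2 : dist z a < -s := hz
  rw [dist_comm] at h2
  have h3 : 0 ≤ Metric.infDist a A := Metric.infDist_nonneg
  simp only at ha
  linarith

lemma aux_D_le_of_infDist_le {A : Set Y} {y : Y} {u : ℝ}
    (h : Metric.infDist y A ≤ u) : D A y ≤ u := by
  have : 0 ≤ Metric.infDist y Aᶜ := Metric.infDist_nonneg
  simp only
  linarith

lemma aux_D_le_of_ball_subset {A : Set Y} (hc : Aᶜ.Nonempty) {y : Y} {u : ℝ}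
    (hu : u < 0) (h : Metric.ball y (-u) ⊆ A) : D A y ≤ u := by
  have hyA : y ∈ A := h (by simp [mem_ball]; linarith)
  have h1 : Metric.infDist y A = 0 := Metric.infDist_zero_of_mem hyA
  have h2 : -u ≤ Metric.infDist y Aᶜ := by
    by_contra hlt
    push_neg at hlt
    rw [Metric.infDist_lt_iff hc] at hlt
    obtain ⟨z, hzc, hz⟩ := hlt
    exact hzc (h (by rwa [mem_ball, dist_comm]))
  simp only
  linarith

/-- Core case s,t ≥ 0. -/
lemma aux_G1 {A : Set Y} (hne : A.Nonempty) (hconv : Convex ℝ A)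
    {a b : Y} {l m s t : ℝ} (hl : 0 ≤ l) (hm : 0 ≤ m) (hlm : l + m = 1)
    (hs : 0 ≤ s) (ht : 0 ≤ t)
    (ha : Metric.infDist a A ≤ s) (hb : Metric.infDist b A ≤ t) :
    Metric.infDist (l • a + m • b) A ≤ l * s + m * t := by
  apply le_of_forall_pos_le_add
  intro ε hε
  have ha' : Metric.infDist a A < s + ε := by linarith
  have hb' : Metric.infDist b A < t + ε := by linarith
  rw [Metric.infDist_lt_iff hne] at ha' hb'
  obtain ⟨a', ha'A, hda⟩ := ha'
  obtain ⟨b', hb'A, hdb⟩ := hb'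
  have hpA : l • a' + m • b' ∈ A := hconv ha'A hb'A hl hm hlm
  calc Metric.infDist (l • a + m • b) A ≤ dist (l • a + m • b) (l • a' + m • b') :=
        Metric.infDist_le_dist_of_mem hpA
    _ ≤ l * dist a a' + m * dist b b' := by
        rw [dist_eq_norm, dist_eq_norm, dist_eq_norm]
        have : l • a + m • b - (l • a' + m • b') = l • (a - a') + m • (b - b') := by
          rw [smul_sub, smul_sub]; abel
        rw [this]
        calc ‖l • (a - a') + m • (b - b')‖ ≤ ‖l • (a - a')‖ + ‖m • (b - b')‖ :=
              norm_add_le _ _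
          _ = l * ‖a - a'‖ + m * ‖b - b'‖ := by
              rw [norm_smul, norm_smul, Real.norm_eq_abs, Real.norm_eq_abs,
                abs_of_nonneg hl, abs_of_nonneg hm]
    _ ≤ l * (s + ε) + m * (t + ε) := by
        have := mul_le_mul_of_nonneg_left hda.le hl
        have := mul_le_mul_of_nonneg_left hdb.le hm
        nlinarith [mul_le_mul_of_nonneg_left hda.le hl, mul_le_mul_of_nonneg_left hdb.le hm]
    _ = l * s + m * t + ε := by nlinarith [hlm]

/-- Core case s,t < 0. -/
lemma aux_G2 {A : Set Y}
    {a b : Y} {l m s t : ℝ} (hl : 0 ≤ l) (hm : 0 ≤ m) (hlm : l + m = 1)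
    (hconv : Convex ℝ A)
    (hs : s < 0) (ht : t < 0)
    (ha : Metric.ball a (-s) ⊆ A) (hb : Metric.ball b (-t) ⊆ A) :
    Metric.ball (l • a + m • b) (-(l * s + m * t)) ⊆ A := by
  intro z hz
  set r := -(l * s + m * t) with hr
  have hrpos : 0 < r := by
    rw [hr]
    rcases eq_or_lt_of_le hl with hl0 | hlpos
    · have hm1 : m = 1 := by linarith
      rw [← hl0, hm1]; simp; linarith
    · have h1 : l * s < 0 := mul_neg_of_pos_of_neg hlpos hs
      have h2 : m * t ≤ 0 := mul_nonpos_of_nonneg_of_nonpos hm ht.le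
      linarith
  rw [mem_ball, dist_eq_norm] at hz
  set v := z - (l • a + m • b) with hv
  have hcoef : l * (-s / r) + m * (-t / r) = 1 := by
    have h1 : l * (-s / r) + m * (-t / r) = -(l * s + m * t) / r := by ring
    rw [h1, ← hr, div_self (ne_of_gt hrpos)]
  have hvz : z = l • (a + ((-s) / r) • v) + m • (b + ((-t) / r) • v) := by
    rw [smul_add, smul_add, smul_smul, smul_smul,
      show l • a + (l * (-s / r)) • v + (m • b + (m * (-t / r)) • v)
        = (l • a + m • b) + (l * (-s / r) + m * (-t / r)) • v from by rw [add_smul]; abel,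
      hcoef, one_smul, hv]
    abel
  rw [hvz]
  apply hconv _ _ hl hm hlm
  · apply ha
    rw [mem_ball, dist_eq_norm]
    have : a + (-s / r) • v - a = (-s / r) • v := by abel
    rw [this, norm_smul, Real.norm_eq_abs,
      abs_of_nonneg (div_nonneg (by linarith) hrpos.le)]
    calc -s / r * ‖v‖ < -s / r * r := by
          exact mul_lt_mul_of_pos_left hz (div_pos (by linarith) hrpos)
      _ = -s := by field_simp
  · apply hb
    rw [mem_ball, dist_eq_norm]
    have : b + (-t / r) • v - b = (-t / r) • v := by abel
    rw [this, norm_smul, Real.norm_eq_abs,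
      abs_of_nonneg (div_nonneg (by linarith) hrpos.le)]
    calc -t / r * ‖v‖ < -t / r * r := by
          exact mul_lt_mul_of_pos_left hz (div_pos (by linarith) hrpos)
      _ = -t := by field_simp

/-- Core mixed case s < 0 ≤ t. -/
lemma aux_G3 {A : Set Y} (hne : A.Nonempty) (hc : Aᶜ.Nonempty) (hconv : Convex ℝ A)
    {a b : Y} {l m s t : ℝ} (hl : 0 ≤ l) (hm : 0 ≤ m) (hlm : l + m = 1)
    (hs : s < 0) (ht : 0 ≤ t)
    (ha : Metric.ball a (-s) ⊆ A) (hb : Metric.infDist b A ≤ t) :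
    D A (l • a + m • b) ≤ l * s + m * t := by
  set u := l * s + m * t with hu
  set y := l • a + m • b with hy
  have haA : a ∈ A := ha (by simp [mem_ball]; linarith)
  rcases le_or_gt 0 u with hu0 | hu0
  · -- u ≥ 0 : show infDist y A ≤ u
    apply aux_D_le_of_infDist_le
    rcases eq_or_lt_of_le hl with hl0 | hlpos
    · -- l = 0 : y = b
      have hm1 : m = 1 := by linarith
      have hyb : y = b := by rw [hy, ← hl0, hm1]; simp
      have hut : u = t := by rw [hu, ← hl0, hm1]; ring
      rw [hyb, hut]
      exact hb
    · apply le_of_forall_pos_le_add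
      intro ε hε
      have hb' : Metric.infDist b A < t + ε := by linarith
      rw [Metric.infDist_lt_iff hne] at hb'
      obtain ⟨b', hb'A, hdb⟩ := hb'
      set z := l • a + m • b' with hz
      have hzA : z ∈ A := hconv haA hb'A hl hm hlm
      have hballz : Metric.ball z (l * (-s)) ⊆ A := by
        intro w hw
        rw [mem_ball, dist_eq_norm] at hw
        have hwz : w = l • (a + l⁻¹ • (w - z)) + m • b' := by
          rw [smul_add, smul_smul, mul_inv_cancel₀ (ne_of_gt hlpos), one_smul, hz]
          abel
        rw [hwz]
        apply hconv _ hb'A hl hm hlm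
        apply ha
        rw [mem_ball, dist_eq_norm]
        have : a + l⁻¹ • (w - z) - a = l⁻¹ • (w - z) := by abel
        rw [this, norm_smul, Real.norm_eq_abs, abs_of_nonneg (inv_nonneg.mpr hl)]
        calc l⁻¹ * ‖w - z‖ < l⁻¹ * (l * (-s)) :=
              mul_lt_mul_of_pos_left hw (inv_pos.mpr hlpos)
          _ = -s := by
              rw [← mul_assoc, inv_mul_cancel₀ (ne_of_gt hlpos), one_mul]
      have hdyz : dist y z ≤ m * dist b b' := by
        rw [hy, hz, dist_eq_norm]
        have : l • a + m • b - (l • a + m • b') = m • (b - b') := by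
          rw [smul_sub]; abel
        rw [this, norm_smul, Real.norm_eq_abs, abs_of_nonneg hm, dist_eq_norm]
      have hkey := aux_infDist_le_of_ball_subset
        (mul_nonneg hl (by linarith : (0:ℝ) ≤ -s)) hzA hballz y
      have hmax : max (dist y z - l * (-s)) 0 ≤ u + m * ε := by
        apply max_le
        · have : dist y z ≤ m * (t + ε) := by
            calc dist y z ≤ m * dist b b' := hdyz
              _ ≤ m * (t + ε) := by nlinarith
          nlinarith
        · positivity
      have hmε : m * ε ≤ ε := by nlinarith
      linarith
  · -- u < 0 : show ball y (-u) ⊆ A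
    apply aux_D_le_of_ball_subset hc hu0
    have hlpos : 0 < l := by nlinarith
    intro z hz
    rw [mem_ball, dist_eq_norm] at hz
    set v := z - y with hv
    set δ := -u - ‖v‖ with hδ
    have hδpos : 0 < δ := by rw [hδ]; linarith
    have hε : (0:ℝ) < l * δ / (2 * (m + 1)) := by positivity
    have hb' : Metric.infDist b A < t + l * δ / (2 * (m + 1)) := by linarith
    rw [Metric.infDist_lt_iff hne] at hb'
    obtain ⟨b', hb'A, hdb⟩ := hb'
    set a' := a + l⁻¹ • (m • (b - b') + v) with ha'
    have hza : z = l • a' + m • b' := by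
      have h1 : l • a' = l • a + (m • (b - b') + v) := by
        rw [ha', smul_add, smul_smul, mul_inv_cancel₀ (ne_of_gt hlpos), one_smul]
      rw [h1, hv, hy, smul_sub]
      abel
    have ha'A : a' ∈ A := by
      apply ha
      rw [mem_ball, dist_eq_norm, ha']
      have : a + l⁻¹ • (m • (b - b') + v) - a = l⁻¹ • (m • (b - b') + v) := by abel
      rw [this, norm_smul, Real.norm_eq_abs, abs_of_nonneg (inv_nonneg.mpr hl)]
      have hnorm : ‖m • (b - b') + v‖ ≤ m * dist b b' + ‖v‖ := by
        calc ‖m • (b - b') + v‖ ≤ ‖m • (b - b')‖ + ‖v‖ := norm_add_le _ _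
          _ = m * ‖b - b'‖ + ‖v‖ := by
              rw [norm_smul, Real.norm_eq_abs, abs_of_nonneg hm]
          _ = m * dist b b' + ‖v‖ := by rw [dist_eq_norm]
      have hbound : m * dist b b' + ‖v‖ < l * (-s) := by
        have hE2 : (m + 1) * (l * δ / (2 * (m + 1))) = l * δ / 2 := by
          field_simp
        have h1 : m * dist b b' ≤ m * t + m * (l * δ / (2 * (m + 1))) := by
          nlinarith [mul_le_mul_of_nonneg_left hdb.le hm]
        have h2 : m * (l * δ / (2 * (m + 1))) ≤ l * δ / 2 := by
          calc m * (l * δ / (2 * (m + 1))) ≤ (m + 1) * (l * δ / (2 * (m + 1))) := by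
                nlinarith
            _ = l * δ / 2 := hE2
        have h3 : ‖v‖ = -u - δ := by rw [hδ]; ring
        have h4 : -u = l * (-s) - m * t := by rw [hu]; ring
        have hl1 : l ≤ 1 := by linarith
        nlinarith [mul_pos hδpos (by linarith : (0:ℝ) < 1 - l / 2)]
      rw [inv_mul_lt_iff₀ hlpos] at *
      calc ‖m • (b - b') + v‖ ≤ m * dist b b' + ‖v‖ := hnorm
        _ < l * (-s) := hbound
    rw [hza]
    exact hconv ha'A hb'A hl hm hlm

/-- Key combination lemma. -/
lemma aux_key {A : Set Y} (hne : A.Nonempty) (hc : Aᶜ.Nonempty) (hconv : Convex ℝ A)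
    {a b : Y} {l m s t : ℝ} (hl : 0 ≤ l) (hm : 0 ≤ m) (hlm : l + m = 1)
    (ha : D A a < s) (hb : D A b < t) :
    D A (l • a + m • b) ≤ l * s + m * t := by
  rcases le_or_gt 0 s with hs | hs <;> rcases le_or_gt 0 t with ht | ht
  · -- s, t ≥ 0
    apply aux_D_le_of_infDist_le
    exact aux_G1 hne hconv hl hm hlm hs ht
      (aux_mem_of_lt_nonneg hne ha hs) (aux_mem_of_lt_nonneg hne hb ht)
  · -- s ≥ 0, t < 0 : symmetric of G3
    have := aux_G3 hne hc hconv hm hl (by linarith) ht hs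
      (aux_mem_of_lt_neg hb ht) (aux_mem_of_lt_nonneg hne ha hs)
    rw [show m • b + l • a = l • a + m • b by abel] at this
    linarith
  · -- s < 0, t ≥ 0
    exact aux_G3 hne hc hconv hl hm hlm hs ht
      (aux_mem_of_lt_neg ha hs) (aux_mem_of_lt_nonneg hne hb ht)
  · -- s, t < 0
    have hu : l * s + m * t < 0 := by
      rcases eq_or_lt_of_le hl with hl0 | hlpos
      · have hm1 : m = 1 := by linarith
        rw [← hl0, hm1]
        simp
        linarith
      · nlinarith [mul_neg_of_pos_of_neg hlpos hs,
          mul_nonpos_of_nonneg_of_nonpos hm ht.le]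
    apply aux_D_le_of_ball_subset hc hu
    exact aux_G2 hl hm hlm hconv hs ht
      (aux_mem_of_lt_neg ha hs) (aux_mem_of_lt_neg hb ht)

end Main

/-- For nonempty convex `A ≠ Y`, the oriented distance
`D_A(y) = d_A(y) - d_{Y∖A}(y)` is convex. -/
theorem orientedDist_convex
    {Y : Type*} [NormedAddCommGroup Y] [NormedSpace ℝ Y]
    (A : Set Y) (hne : A.Nonempty) (hAconv : Convex ℝ A) (hAne : A ≠ Set.univ) :
    ConvexOn ℝ Set.univ (fun y : Y => Metric.infDist y A - Metric.infDist y Aᶜ) := by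
  have hc : Aᶜ.Nonempty := by
    rw [Set.nonempty_compl]
    exact hAne
  refine ⟨convex_univ, ?_⟩
  intro a _ b _ l m hl hm hlm
  simp only [smul_eq_mul]
  apply le_of_forall_pos_le_add
  intro ε hε
  have ha : (Metric.infDist a A - Metric.infDist a Aᶜ) <
      (Metric.infDist a A - Metric.infDist a Aᶜ) + ε := by linarith
  have hb : (Metric.infDist b A - Metric.infDist b Aᶜ) <
      (Metric.infDist b A - Metric.infDist b Aᶜ) + ε := by linarith
  have := aux_key hne hc hAconv hl hm hlm ha hb
  calc Metric.infDist (l • a + m • b) A - Metric.infDist (l • a + m • b) Aᶜ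
      ≤ l * ((Metric.infDist a A - Metric.infDist a Aᶜ) + ε)
        + m * ((Metric.infDist b A - Metric.infDist b Aᶜ) + ε) := this
    _ = l * (Metric.infDist a A - Metric.infDist a Aᶜ)
        + m * (Metric.infDist b A - Metric.infDist b Aᶜ) + ε := by
          nlinarith [hlm]
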